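/- Let k be a field of characteristic 2, m an odd positive integer, and a ∈ k*. The map t ↦ t·(1 − a t^m)^{−1/m}, interpreted as t ↦ t·u where u ∈ k[[t]] is the unique power series with constant term 1 satisfying u^m = (1 + a t^m)^{−1} (using −1 = 1 in characteristic 2), defines an element of order exactly 2 in the Nottingham group over k. -/

import Mathlib

open PowerSeries
noncomputable section

/-- The product (= `t`-adic) topology on `k[[t]]`, `k` being discrete. -/
def psTop (k : Type*) : TopologicalSpace (PowerSeries k) :=
  letI : TopologicalSpace k := ⊥
  inferInstanceAs (TopologicalSpace ((Unit →₀ ℕ) → k))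

-- binomial expansion lemma
lemma aux_binom {R : Type*} [CommRing R] (x : R) :
    ∀ n : ℕ, ∃ s : R, (1 + x) ^ n = 1 + n * x + x ^ 2 * s := by
  intro n
  induction n with
  | zero => exact ⟨0, by ring⟩
  | succ n ih =>
    obtain ⟨s, hs⟩ := ih
    exact ⟨n + s + x * s, by rw [pow_succ, hs]; push_cast; ring⟩

-- uniqueness of m-th roots of one
lemma aux_root {k : Type*} [Field k] [CharP k 2] {m : ℕ} (hodd : Odd m)
    {v : PowerSeries k} (h0 : constantCoeff v = 1) (hv : v ^ m = 1) : v = 1 := by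
  have hmk : ((m : ℕ) : k) = 1 := by
    obtain ⟨j, rfl⟩ := hodd
    have h2 : (2 : k) = 0 := by exact_mod_cast CharP.cast_eq_zero k 2
    push_cast
    rw [h2]
    ring
  set x := v - 1 with hx
  have hv1 : v = 1 + x := by ring
  have hx0 : constantCoeff x = 0 := by simp [hx, h0]
  suffices hxz : x = 0 by rw [hv1, hxz, add_zero]
  by_contra hxne
  obtain ⟨s, hs⟩ := aux_binom x m
  have key : C ((m : ℕ) : k) * x = x ^ 2 * (-s) := by
    have : (1 : PowerSeries k) + ((m : ℕ) : PowerSeries k) * x + x ^ 2 * s = 1 := by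
      rw [← hs, ← hv1, hv]
    have h2 : ((m : ℕ) : PowerSeries k) * x + x ^ 2 * s = 0 := by linear_combination this
    rw [map_natCast C m]
    linear_combination h2
  have hCm : (C ((m : ℕ) : k)) ≠ 0 := by
    rw [hmk, map_one]; exact one_ne_zero
  have hsne : (-s : PowerSeries k) ≠ 0 := by
    intro h
    rw [h, mul_zero, mul_eq_zero] at key
    rcases key with h | h
    · exact hCm h
    · exact hxne h
  -- order computation
  have hordC : order (C ((m : ℕ) : k)) = 0 := by
    apply le_antisymm _ (zero_le)
    have hc : PowerSeries.coeff 0 (C ((m : ℕ) : k)) = ((m : ℕ) : k) :=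
      PowerSeries.coeff_zero_C _
    have hne : PowerSeries.coeff 0 (C ((m : ℕ) : k)) ≠ 0 := by
      rw [hc, hmk]; exact one_ne_zero
    have := order_le (φ := C ((m : ℕ) : k)) 0 hne
    simpa using this
  have hord1 : (1 : ℕ∞) ≤ order x := by
    have := nat_le_order x 1 (by
      intro i hi
      interval_cases i
      simpa using hx0)
    simpa using this
  have hxfin : order x ≠ ⊤ := fun h => hxne (PowerSeries.order_eq_top.mp h)
  have h1 : order (C ((m : ℕ) : k) * x) = order x := by
    rw [order_mul, hordC, zero_add]
  have h2 : order (x ^ 2 * (-s)) = order x + (order x + order (-s)) := by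
    rw [order_mul, pow_two, order_mul, add_assoc]
  have h3 : order x = order x + (order x + order (-s)) := by
    calc order x = order (C ((m : ℕ) : k) * x) := h1.symm
      _ = order (x ^ 2 * (-s)) := by rw [key]
      _ = order x + (order x + order (-s)) := h2
  have h4 : (0 : ℕ∞) = order x + order (-s) := by
    have := h3
    nth_rewrite 1 [← add_zero (order x)] at this
    exact WithTop.add_left_cancel hxfin this
  have h5 : order x = 0 := by
    have := (add_eq_zero).mp h4.symm
    exact this.1
  rw [h5] at hord1
  exact absurd hord1 (by simp)

-- any algebra automorphism preserves the constant coefficient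
lemma aux_constCoeff {k : Type*} [Field k] (σ : PowerSeries k ≃ₐ[k] PowerSeries k)
    (f : PowerSeries k) : constantCoeff (σ f) = constantCoeff f := by
  set c := constantCoeff f with hc
  have hgs : constantCoeff (σ (f - C c)) = 0 := by
    by_contra h
    have h1 : IsUnit (σ (f - C c)) :=
      PowerSeries.isUnit_iff_constantCoeff.mpr (isUnit_iff_ne_zero.mpr h)
    have h2 : IsUnit (f - C c) := by
      have := h1.map σ.symm
      rwa [AlgEquiv.symm_apply_apply] at this
    have h3 := PowerSeries.isUnit_iff_constantCoeff.mp h2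
    rw [map_sub, PowerSeries.constantCoeff_C, ← hc, sub_self] at h3
    exact not_isUnit_zero h3
  have hCc : σ (C c) = C c := by
    rw [PowerSeries.C_eq_algebraMap]
    exact σ.commutes c
  have hsplit : f = C c + (f - C c) := by ring
  conv_lhs => rw [hsplit]
  rw [map_add, map_add, hCc, PowerSeries.constantCoeff_C, hgs, add_zero]

-- polynomials are dense in the power series ring with the product topology
lemma aux_dense (k : Type*) [Field k] :
    @Dense (PowerSeries k) (psTop k)
      (Set.range ((↑·) : Polynomial k → PowerSeries k)) := by
  letI : TopologicalSpace k := ⊥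
  letI : TopologicalSpace (PowerSeries k) := psTop k
  rw [dense_iff_inter_open]
  rintro U hU ⟨f, hf⟩
  have hU' : @IsOpen ((Unit →₀ ℕ) → k) Pi.topologicalSpace U := hU
  obtain ⟨I, uSet, h1, h2⟩ := isOpen_pi_iff.mp hU' f hf
  set N : ℕ := (I.sup fun d => d ()) + 1 with hN
  set g : PowerSeries k := ((PowerSeries.trunc N f : Polynomial k) : PowerSeries k) with hg
  have happ : ∀ (φ : PowerSeries k) (d : Unit →₀ ℕ),
      φ d = PowerSeries.coeff (d ()) φ := by
    intro φ d
    have hd : d = Finsupp.single () (d ()) := by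
      apply Finsupp.ext
      intro i
      cases i
      simp
    conv_lhs => rw [hd]
    rfl
  have hmem : g ∈ (I : Set (Unit →₀ ℕ)).pi uSet := by
    intro i hi
    have : g i = f i := by
      rw [happ g i, happ f i]
      have hlt : i () < N := Nat.lt_succ_of_le (Finset.le_sup (f := fun d => d ()) hi)
      rw [hg, Polynomial.coeff_coe, PowerSeries.coeff_trunc, if_pos hlt]
    rw [this]
    exact (h1 i hi).2
  exact ⟨g, h2 hmem, ⟨PowerSeries.trunc N f, rfl⟩⟩

/-- let `k` have characteristic 2, `m` an odd positive integer, `a ∈ k*`, and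
let `u ∈ k[[t]]` be the (unique) power series with constant term 1 and `uᵐ = (1 + a tᵐ)⁻¹`
(note `−1 = 1` in characteristic 2).  Then any continuous `k`-algebra automorphism `σ` of
`k[[t]]` with `σ(t) = t·u` is an element of order exactly 2 of the Nottingham group:
`σ(t) ≡ t mod t²`, `σ² = 1` and `σ ≠ 1`. -/
theorem klopsch_order_two (k : Type*) [Field k] [CharP k 2] (m : ℕ) (hm : 0 < m)
    (hodd : Odd m) (a : k) (ha : a ≠ 0) (u : PowerSeries k)
    (hu0 : PowerSeries.constantCoeff u = 1)
    (hum : u ^ m = (1 + PowerSeries.C a * X ^ m : PowerSeries k)⁻¹)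
    (σ : PowerSeries k ≃ₐ[k] PowerSeries k)
    (hcont : letI := psTop k; Continuous σ)
    (hσ : σ (X : PowerSeries k) = X * u) :
    (PowerSeries.coeff 0 (σ (X : PowerSeries k)) = 0 ∧
        PowerSeries.coeff 1 (σ (X : PowerSeries k)) = 1) ∧
      σ ^ 2 = 1 ∧ σ ≠ 1 := by
  set g : PowerSeries k := 1 + PowerSeries.C a * X ^ m with hgdef
  have hg0 : constantCoeff g = 1 := by
    simp [hgdef, zero_pow hm.ne']
  have hgne : constantCoeff g ≠ 0 := by rw [hg0]; exact one_ne_zero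
  -- u^m * g = 1
  have h1 : u ^ m * g = 1 := by
    rw [hum]
    exact PowerSeries.inv_mul_cancel g hgne
  -- characteristic two in the power series ring
  have hch : ∀ y : PowerSeries k, y + y = 0 := by
    intro y
    have h2k : (2 : k) = 0 := by exact_mod_cast CharP.cast_eq_zero k 2
    have h2ps : (2 : PowerSeries k) = 0 := by
      rw [← map_ofNat C 2, h2k, map_zero]
    rw [← two_mul, h2ps, zero_mul]
  -- apply σ to h1
  have hCa : σ (PowerSeries.C a) = PowerSeries.C a := by
    rw [PowerSeries.C_eq_algebraMap]
    exact σ.commutes a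
  have h2 : (σ u) ^ m * (1 + PowerSeries.C a * X ^ m * u ^ m) = 1 := by
    have := congrArg σ h1
    rw [map_mul, map_pow, map_one, hgdef, map_add, map_one, map_mul, map_pow, hCa, hσ,
      mul_pow] at this
    calc (σ u) ^ m * (1 + PowerSeries.C a * X ^ m * u ^ m)
        = σ u ^ m * (1 + PowerSeries.C a * (X ^ m * u ^ m)) := by ring
      _ = 1 := this
  -- 1 + a X^m u^m = u^m
  have h3 : (1 + PowerSeries.C a * X ^ m * u ^ m : PowerSeries k) = u ^ m := by
    have : (1 : PowerSeries k) + PowerSeries.C a * X ^ m * u ^ m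
        = u ^ m * g + PowerSeries.C a * X ^ m * u ^ m := by rw [h1]
    rw [this, hgdef]
    have hcc := hch (PowerSeries.C a * X ^ m * u ^ m)
    linear_combination hcc
  -- (u * σ u)^m = 1
  have h4 : (u * σ u) ^ m = 1 := by
    rw [mul_pow]
    calc u ^ m * σ u ^ m = σ u ^ m * (1 + PowerSeries.C a * X ^ m * u ^ m) := by
          rw [h3]; ring
      _ = 1 := h2
  -- constant coefficient of u * σ u is 1
  have h5 : constantCoeff (u * σ u) = 1 := by
    rw [map_mul, hu0, aux_constCoeff σ u, hu0, one_mul]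
  -- u * σ u = 1
  have h6 : u * σ u = 1 := aux_root hodd h5 h4
  -- σ (σ X) = X
  have h7 : σ (σ (X : PowerSeries k)) = X := by
    rw [hσ, map_mul, hσ]
    calc X * u * σ u = X * (u * σ u) := by ring
      _ = X := by rw [h6, mul_one]
  constructor
  · constructor
    · rw [hσ, PowerSeries.coeff_zero_eq_constantCoeff_apply, map_mul,
        PowerSeries.constantCoeff_X, zero_mul]
    · rw [hσ, mul_comm, PowerSeries.coeff_succ_mul_X 0 u,
        PowerSeries.coeff_zero_eq_constantCoeff_apply, hu0]
  constructor
  · -- σ ^ 2 = 1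
    letI : TopologicalSpace k := ⊥
    letI : TopologicalSpace (PowerSeries k) := psTop k
    haveI : DiscreteTopology k := ⟨rfl⟩
    haveI : T2Space (PowerSeries k) := inferInstanceAs (T2Space ((Unit →₀ ℕ) → k))
    have hc : Continuous (fun f : PowerSeries k => σ (σ f)) := hcont.comp hcont
    -- the coercion algebra hom
    have hcoe : ∀ p : Polynomial k,
        Polynomial.coeToPowerSeries.algHom (R := k) k p = (p : PowerSeries k) := by
      intro p
      rw [Polynomial.coeToPowerSeries.algHom_apply]
      have : algebraMap k k = RingHom.id k := Algebra.algebraMap_self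
      rw [this, PowerSeries.map_id]
      rfl
    have hpoly : ∀ p : Polynomial k, σ (σ (p : PowerSeries k)) = (p : PowerSeries k) := by
      have hF : (σ.toAlgHom.comp σ.toAlgHom).comp (Polynomial.coeToPowerSeries.algHom (R := k) k)
          = Polynomial.coeToPowerSeries.algHom (R := k) k := by
        apply Polynomial.algHom_ext
        simp only [AlgHom.coe_comp, Function.comp_apply, AlgEquiv.toAlgHom_eq_coe,
          AlgHom.coe_coe]
        rw [hcoe Polynomial.X, Polynomial.coe_X]; exact h7
      intro p
      have := congrArg (fun F => F p) hF
      simp only [AlgHom.coe_comp, Function.comp_apply, AlgEquiv.toAlgHom_eq_coe,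
        AlgHom.coe_coe] at this
      rwa [hcoe p] at this
    have hfun : (fun f : PowerSeries k => σ (σ f)) = (id : PowerSeries k → PowerSeries k) := by
      apply Continuous.ext_on (aux_dense k) hc continuous_id
      rintro y ⟨p, rfl⟩
      exact hpoly p
    refine AlgEquiv.ext fun f => ?_
    rw [pow_two, AlgEquiv.mul_apply, AlgEquiv.one_apply]
    exact congrFun hfun f
  · -- σ ≠ 1
    intro h
    have hX : σ (X : PowerSeries k) = X := by rw [h]; rfl
    rw [hσ] at hX
    have hu1 : u = 1 := by
      have := mul_left_cancel₀ (PowerSeries.X_ne_zero (R := k)) (hX.trans (mul_one X).symm)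
      exact this
    rw [hu1, one_pow] at hum
    have hg1 : g = 1 := by
      have := h1
      rw [hu1, one_pow, one_mul] at this
      exact this
    have : PowerSeries.coeff m g = PowerSeries.coeff m 1 := by rw [hg1]
    rw [hgdef, map_add, PowerSeries.coeff_C_mul, PowerSeries.coeff_X_pow_self,
      PowerSeries.coeff_one, if_neg hm.ne'] at this
    simp only [zero_add, mul_one] at this
    exact ha this
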